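/- Let E = EuclideanSpace ℝ (Fin k), let A be a subset of the unit sphere {z ∈ E : ‖z‖ = 1}, let x ∈ A, and let V be a nonzero linear subspace of E with ⟨v, x⟩ = 0 for all v ∈ V. For each unit vector η ∈ V define the local reach θ_ℓ(x,η) = sSup {p ∈ [0, π] : ∀ y ∈ A, ⟨y, (cos p)·x + (sin p)·η⟩ ≤ cos p}, and set θ(x) = min(⨅_{η ∈ V, ‖η‖=1} θ_ℓ(x,η), π/2). Assume the set {‖P_V y‖²/(1 − ⟨x, y⟩)² : y ∈ A, y ≠ x} is bounded above, where P_V is the orthogonal projection onto V. Then θ(x) > 0 and cot²(θ(x)) = sSup {‖P_V y‖²/(1 − ⟨x, y⟩)² : y ∈ A, y ≠ x} (with sSup ∅ = 0). -/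

import Mathlib

open Real
open scoped RealInnerProductSpace

private lemma cot_eq_tan_pi_div_two_sub (x : ℝ) :
    Real.cot x = Real.tan (π / 2 - x) := by
  rw [Real.cot_eq_cos_div_sin, Real.tan_eq_sin_div_cos, Real.sin_pi_div_two_sub,
    Real.cos_pi_div_two_sub]

private lemma tan_mono_aux {a b : ℝ} (ha : 0 ≤ a) (hab : a ≤ b) (hb : b < π / 2) :
    Real.tan a ≤ Real.tan b := by
  have hπ := Real.pi_pos
  exact Real.strictMonoOn_tan.monotoneOn ⟨by linarith, by linarith⟩ ⟨by linarith, hb⟩ hab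

set_option maxHeartbeats 1000000 in
/-- The critical radius formula (Lemma 4.1 / Appendix 1): for a subset `A` of the unit
sphere of `EuclideanSpace ℝ (Fin k)`, a point `x ∈ A`, and a nonzero subspace `V`
orthogonal to `x`, let `θℓ η` be the local reach at `x` in a unit direction `η ∈ V`, and
`θ = min (⨅ unit η ∈ V, θℓ η) (π/2)`.  If the set
`S = {‖P_V y‖² / (1 − ⟪x,y⟫)² : y ∈ A, y ≠ x}` is bounded above, then `θ > 0` and
`cot² θ = sSup S`, where `P_V` is the orthogonal projection onto `V`. -/
theorem reach_formula {k : ℕ}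
    (A : Set (EuclideanSpace ℝ (Fin k))) (hA : A ⊆ {z | ‖z‖ = 1})
    (x : EuclideanSpace ℝ (Fin k)) (hx : x ∈ A)
    (V : Submodule ℝ (EuclideanSpace ℝ (Fin k))) (hV : V ≠ ⊥)
    (hVx : ∀ v ∈ V, ⟪v, x⟫ = 0)
    (θℓ : EuclideanSpace ℝ (Fin k) → ℝ)
    (hθℓ : ∀ η, θℓ η = sSup {p : ℝ | p ∈ Set.Icc 0 π ∧
      ∀ y ∈ A, ⟪y, Real.cos p • x + Real.sin p • η⟫ ≤ Real.cos p})
    (θ : ℝ)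
    (hθ : θ = min (⨅ η : {η : EuclideanSpace ℝ (Fin k) // η ∈ V ∧ ‖η‖ = 1}, θℓ η) (π / 2))
    (S : Set ℝ)
    (hS : S = {s : ℝ | ∃ y ∈ A, y ≠ x ∧
      s = ‖(Submodule.orthogonalProjection V y : EuclideanSpace ℝ (Fin k))‖ ^ 2 / (1 - ⟪x, y⟫) ^ 2})
    (hbdd : BddAbove S) :
    0 < θ ∧ Real.cot θ ^ 2 = sSup S := by
  classical
  have hπ := Real.pi_pos
  have hxn : ‖x‖ = 1 := hA hx
  -- basic positivity of elements of S
  have hSnn : ∀ s ∈ S, 0 ≤ s := by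
    intro s hs
    rw [hS] at hs
    obtain ⟨y, _, _, rfl⟩ := hs
    positivity
  have hM0 : 0 ≤ sSup S := by
    rcases Set.eq_empty_or_nonempty S with h | ⟨s, hs⟩
    · simp [h, Real.sSup_empty]
    · exact (hSnn s hs).trans (le_csSup hbdd hs)
  obtain ⟨m, hm⟩ : ∃ m : ℝ, m = Real.sqrt (sSup S) := ⟨_, rfl⟩
  have hm0 : 0 ≤ m := hm ▸ Real.sqrt_nonneg _
  have hmm : m * m = sSup S := by rw [hm]; exact Real.mul_self_sqrt hM0
  obtain ⟨p₀, hp₀⟩ : ∃ p : ℝ, p = π / 2 - Real.arctan m := ⟨_, rfl⟩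
  have harctan_nonneg : 0 ≤ Real.arctan m := by
    simpa using Real.arctan_strictMono.monotone hm0
  have hp₀pos : 0 < p₀ := hp₀ ▸ sub_pos.mpr (Real.arctan_lt_pi_div_two m)
  have hp₀le : p₀ ≤ π / 2 := by rw [hp₀]; linarith
  have hsinp₀ : Real.sin p₀ = Real.cos (Real.arctan m) := by
    rw [hp₀]; exact Real.sin_pi_div_two_sub _
  have hcosp₀ : Real.cos p₀ = Real.sin (Real.arctan m) := by
    rw [hp₀]; exact Real.cos_pi_div_two_sub _
  have hkey : Real.cos p₀ = m * Real.sin p₀ := by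
    have h := Real.tan_mul_cos (x := Real.arctan m) (Real.cos_arctan_pos m).ne'
    rw [Real.tan_arctan] at h
    rw [hcosp₀, hsinp₀, ← h]
  have hsinp₀nn : 0 ≤ Real.sin p₀ := by
    rw [hsinp₀]; exact (Real.cos_arctan_pos m).le
  -- projection facts
  have hprojV : ∀ (y η : EuclideanSpace ℝ (Fin k)), η ∈ V →
      ⟪y, η⟫ = ⟪(Submodule.orthogonalProjection V y : EuclideanSpace ℝ (Fin k)), η⟫ := by
    intro y η hη
    have h := Submodule.sub_starProjection_mem_orthogonal (K := V) y
    have h2 : ⟪η, y - (Submodule.orthogonalProjection V y : EuclideanSpace ℝ (Fin k))⟫ = 0 :=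
      (Submodule.mem_orthogonal V _).mp h η hη
    rw [inner_sub_right] at h2
    have c1 := real_inner_comm η y
    have c2 := real_inner_comm η (Submodule.orthogonalProjection V y : EuclideanSpace ℝ (Fin k))
    linarith
  -- strict Cauchy-Schwarz on the sphere
  have hinner_lt : ∀ y ∈ A, y ≠ x → ⟪x, y⟫ < 1 := by
    intro y hy hyx
    have hyn : ‖y‖ = 1 := hA hy
    have hle : ⟪x, y⟫ ≤ 1 := by
      have := real_inner_le_norm x y
      rwa [hxn, hyn, one_mul] at this
    rcases lt_or_eq_of_le hle with h | h
    · exact h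
    · exfalso
      have h' : ⟪x, y⟫ = ‖x‖ * ‖y‖ := by rw [hxn, hyn, one_mul]; exact h
      have h'' := inner_eq_norm_mul_iff_real.mp h'
      rw [hxn, hyn, one_smul, one_smul] at h''
      exact hyx h''.symm
  -- the membership of p₀ in every direction's admissible set
  have hcond : ∀ η, η ∈ V → ‖η‖ = 1 →
      p₀ ∈ {p : ℝ | p ∈ Set.Icc 0 π ∧
        ∀ y ∈ A, ⟪y, Real.cos p • x + Real.sin p • η⟫ ≤ Real.cos p} := by
    intro η hηV hηn
    refine ⟨⟨hp₀pos.le, by linarith⟩, ?_⟩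
    intro y hy
    have hyn : ‖y‖ = 1 := hA hy
    rw [inner_add_right, real_inner_smul_right, real_inner_smul_right]
    by_cases hyx : y = x
    · subst hyx
      have h1 : ⟪y, y⟫ = 1 := by
        rw [real_inner_self_eq_norm_sq, hyn]; norm_num
      have h2 : ⟪y, η⟫ = 0 := by rw [real_inner_comm]; exact hVx η hηV
      rw [h1, h2]; ring_nf; exact le_rfl
    · have hxy1 : ⟪x, y⟫ < 1 := hinner_lt y hy hyx
      have hcpos : 0 < 1 - ⟪x, y⟫ := by linarith
      have hsmem : ‖(Submodule.orthogonalProjection V y : EuclideanSpace ℝ (Fin k))‖ ^ 2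
          / (1 - ⟪x, y⟫) ^ 2 ∈ S := by
        rw [hS]; exact ⟨y, hy, hyx, rfl⟩
      have h3 := le_csSup hbdd hsmem
      have h4 : ‖(Submodule.orthogonalProjection V y : EuclideanSpace ℝ (Fin k))‖
          ≤ m * (1 - ⟪x, y⟫) := by
        have hP2 : ‖(Submodule.orthogonalProjection V y : EuclideanSpace ℝ (Fin k))‖ ^ 2
            ≤ sSup S * (1 - ⟪x, y⟫) ^ 2 := by
          rw [div_le_iff₀ (by positivity)] at h3
          linarith
        calc ‖(Submodule.orthogonalProjection V y : EuclideanSpace ℝ (Fin k))‖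
            = Real.sqrt (‖(Submodule.orthogonalProjection V y : EuclideanSpace ℝ (Fin k))‖ ^ 2) :=
              (Real.sqrt_sq (norm_nonneg _)).symm
          _ ≤ Real.sqrt (sSup S * (1 - ⟪x, y⟫) ^ 2) := Real.sqrt_le_sqrt hP2
          _ = m * (1 - ⟪x, y⟫) := by
              rw [Real.sqrt_mul hM0, Real.sqrt_sq hcpos.le, hm]
      have h5 : ⟪y, η⟫ ≤ ‖(Submodule.orthogonalProjection V y : EuclideanSpace ℝ (Fin k))‖ := by
        rw [hprojV y η hηV]
        calc ⟪(Submodule.orthogonalProjection V y : EuclideanSpace ℝ (Fin k)), η⟫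
            ≤ ‖(Submodule.orthogonalProjection V y : EuclideanSpace ℝ (Fin k))‖ * ‖η‖ :=
              real_inner_le_norm _ _
          _ = ‖(Submodule.orthogonalProjection V y : EuclideanSpace ℝ (Fin k))‖ := by
              rw [hηn, mul_one]
      have hxy : ⟪y, x⟫ = ⟪x, y⟫ := real_inner_comm _ _
      have h6 : Real.sin p₀ * (m * (1 - ⟪x, y⟫)) = Real.cos p₀ * (1 - ⟪x, y⟫) := by
        rw [hkey]; ring
      rw [hxy]
      nlinarith [mul_le_mul_of_nonneg_left h5 hsinp₀nn,
        mul_le_mul_of_nonneg_left h4 hsinp₀nn]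
  -- nonemptiness of the direction set
  obtain ⟨v, hvV, hv0⟩ := (Submodule.ne_bot_iff V).mp hV
  haveI : Nonempty {η : EuclideanSpace ℝ (Fin k) // η ∈ V ∧ ‖η‖ = 1} :=
    ⟨⟨(‖v‖⁻¹ : ℝ) • v, V.smul_mem _ hvV, norm_smul_inv_norm hv0⟩⟩
  have hbddc : ∀ η : EuclideanSpace ℝ (Fin k), BddAbove {p : ℝ | p ∈ Set.Icc 0 π ∧
      ∀ y ∈ A, ⟪y, Real.cos p • x + Real.sin p • η⟫ ≤ Real.cos p} :=
    fun η => ⟨π, fun p hp => hp.1.2⟩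
  have hθℓ_ge : ∀ η : {η : EuclideanSpace ℝ (Fin k) // η ∈ V ∧ ‖η‖ = 1}, p₀ ≤ θℓ η := by
    intro η
    rw [hθℓ]
    exact le_csSup (hbddc _) (hcond η η.2.1 η.2.2)
  have hθge : p₀ ≤ θ := by
    rw [hθ]; exact le_min (le_ciInf hθℓ_ge) hp₀le
  have hθpos : 0 < θ := lt_of_lt_of_le hp₀pos hθge
  have hθle : θ ≤ π / 2 := hθ ▸ min_le_right _ _
  -- upper bound: cot θ ^ 2 ≤ sSup S
  have hcotθ0 : 0 ≤ Real.cot θ := by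
    rw [cot_eq_tan_pi_div_two_sub]
    have h := tan_mono_aux (a := 0) le_rfl (by linarith : (0:ℝ) ≤ π / 2 - θ)
      (by linarith : π / 2 - θ < π / 2)
    simpa using h
  have hcotθ_le : Real.cot θ ≤ m := by
    rw [cot_eq_tan_pi_div_two_sub]
    have h := tan_mono_aux (a := π / 2 - θ) (by linarith) (by linarith :
      π / 2 - θ ≤ π / 2 - p₀) (by linarith : π / 2 - p₀ < π / 2)
    have h2 : Real.tan (π / 2 - p₀) = m := by
      rw [hp₀]
      simp [Real.tan_arctan]
    linarith
  have hub : Real.cot θ ^ 2 ≤ sSup S := by nlinarith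
  -- lower bound: every element of S is at most cot θ ^ 2
  have hlow : ∀ s ∈ S, s ≤ Real.cot θ ^ 2 := by
    intro s hs
    rw [hS] at hs
    obtain ⟨y, hy, hyx, rfl⟩ := hs
    have hyn : ‖y‖ = 1 := hA hy
    have hxy1 : ⟪x, y⟫ < 1 := hinner_lt y hy hyx
    have hcpos : 0 < 1 - ⟪x, y⟫ := by linarith
    by_cases hP0 : (Submodule.orthogonalProjection V y : EuclideanSpace ℝ (Fin k)) = 0
    · rw [hP0]
      have h0 : ‖(0 : EuclideanSpace ℝ (Fin k))‖ ^ 2 / (1 - ⟪x, y⟫) ^ 2 = 0 := by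
        rw [norm_zero]; simp
      rw [h0]
      positivity
    · have hPpos : 0 < ‖(Submodule.orthogonalProjection V y : EuclideanSpace ℝ (Fin k))‖ :=
        norm_pos_iff.mpr hP0
      obtain ⟨q, hq⟩ : ∃ q : ℝ,
          q = ‖(Submodule.orthogonalProjection V y : EuclideanSpace ℝ (Fin k))‖ / (1 - ⟪x, y⟫) :=
        ⟨_, rfl⟩
      have hqpos : 0 < q := hq ▸ div_pos hPpos hcpos
      obtain ⟨ps, hps⟩ : ∃ p : ℝ, p = π / 2 - Real.arctan q := ⟨_, rfl⟩
      have harctanq_pos : 0 < Real.arctan q := by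
        simpa using Real.arctan_strictMono hqpos
      have hpspos : 0 < ps := hps ▸ sub_pos.mpr (Real.arctan_lt_pi_div_two q)
      have hpslt : ps < π / 2 := by rw [hps]; linarith
      obtain ⟨η, hηdef⟩ : ∃ η : EuclideanSpace ℝ (Fin k),
          η = (‖(Submodule.orthogonalProjection V y : EuclideanSpace ℝ (Fin k))‖⁻¹ : ℝ) •
            (Submodule.orthogonalProjection V y : EuclideanSpace ℝ (Fin k)) := ⟨_, rfl⟩
      have hηV : η ∈ V := hηdef ▸ V.smul_mem _ (SetLike.coe_mem _)
      have hηn : ‖η‖ = 1 := hηdef ▸ norm_smul_inv_norm hP0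
      have hyη : ⟪y, η⟫ = ‖(Submodule.orthogonalProjection V y : EuclideanSpace ℝ (Fin k))‖ := by
        rw [hηdef, real_inner_smul_right,
          hprojV y _ (SetLike.coe_mem _), real_inner_self_eq_norm_sq]
        field_simp
      -- the admissible set in direction η is bounded by ps
      have hθℓle : θℓ η ≤ ps := by
        rw [hθℓ]
        apply csSup_le
        · refine ⟨0, ⟨le_rfl, hπ.le⟩, ?_⟩
          intro z hz
          have hzn : ‖z‖ = 1 := hA hz
          simp only [Real.cos_zero, Real.sin_zero, one_smul, zero_smul, add_zero]
          have := real_inner_le_norm z x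
          rwa [hzn, hxn, one_mul] at this
        · rintro p ⟨⟨hp0, hpπ⟩, hcondp⟩
          by_contra hgt
          push_neg at hgt
          have h1 := hcondp y hy
          rw [inner_add_right, real_inner_smul_right, real_inner_smul_right, hyη] at h1
          have hxy : ⟪y, x⟫ = ⟪x, y⟫ := real_inner_comm _ _
          rw [hxy] at h1
          have h2 : Real.sin p * ‖(Submodule.orthogonalProjection V y : EuclideanSpace ℝ (Fin k))‖
              ≤ Real.cos p * (1 - ⟪x, y⟫) := by nlinarith
          rcases lt_or_eq_of_le hpπ with hplt | hpe
          · have hsinp : 0 < Real.sin p :=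
              Real.sin_pos_of_pos_of_lt_pi (lt_trans hpspos hgt) hplt
            have hcosp : 0 < Real.cos p := by nlinarith
            have hplt2 : p < π / 2 := by
              by_contra hge
              push_neg at hge
              have := Real.cos_nonpos_of_pi_div_two_le_of_le hge (by linarith)
              linarith
            have htanle : Real.tan p ≤ q⁻¹ := by
              rw [Real.tan_eq_sin_div_cos, hq, inv_div]
              rw [div_le_div_iff₀ hcosp hPpos]
              linarith
            have hpsq : Real.arctan q⁻¹ = ps :=
              hps ▸ Real.arctan_inv_of_pos hqpos
            have htanps : Real.tan ps = q⁻¹ := by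
              rw [← hpsq, Real.tan_arctan]
            have hmono := Real.strictMonoOn_tan
              (Set.mem_Ioo.mpr ⟨by linarith, hpslt⟩)
              (Set.mem_Ioo.mpr ⟨by linarith, hplt2⟩) hgt
            rw [htanps] at hmono
            linarith
          · rw [hpe, Real.sin_pi, Real.cos_pi] at h2
            nlinarith
      have hθleps : θ ≤ ps := by
        rw [hθ]
        refine le_trans (min_le_left _ _) (le_trans ?_ hθℓle)
        have hbb : BddBelow (Set.range fun η' : {η' : EuclideanSpace ℝ (Fin k) // η' ∈ V ∧ ‖η'‖ = 1} => θℓ η') := by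
          refine ⟨p₀, ?_⟩
          rintro r ⟨η', rfl⟩
          exact hθℓ_ge η'
        exact ciInf_le hbb ⟨η, hηV, hηn⟩
      have hcot_ge : q ≤ Real.cot θ := by
        rw [cot_eq_tan_pi_div_two_sub]
        have h := tan_mono_aux (a := π / 2 - ps) (by linarith)
          (by linarith : π / 2 - ps ≤ π / 2 - θ) (by linarith : π / 2 - θ < π / 2)
        have h2 : Real.tan (π / 2 - ps) = q := by
          rw [hps]; simp [Real.tan_arctan]
        linarith
      have hrw : ‖(Submodule.orthogonalProjection V y : EuclideanSpace ℝ (Fin k))‖ ^ 2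
          / (1 - ⟪x, y⟫) ^ 2 = q ^ 2 := by
        rw [hq, div_pow]
      rw [hrw]
      exact pow_le_pow_left₀ hqpos.le hcot_ge 2
  refine ⟨hθpos, le_antisymm hub ?_⟩
  rcases Set.eq_empty_or_nonempty S with hSe | hSne
  · rw [hSe, Real.sSup_empty]
    positivity
  · exact csSup_le hSne hlow
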